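/- arXiv:2311.08316 — 2 statements merged into one kernel-verified Lean document; each statement's English description precedes it below -/
import Mathlib

section
/- Let U ∈ ℝ^{m×k} have orthonormal columns and S ∈ ℝ^{d×m}. Suppose 1−δ ≤ σ_min(SU) and σ_max(SU) ≤ 1+δ for some δ ∈ [0,1). Then for every matrix M with range(M) ⊆ range(U) and every j, (1−δ) σ_j(M) ≤ σ_j(SM) ≤ (1+δ) σ_j(M). -/
open Matrix BigOperators

noncomputable def sval {m n : ℕ} (A : Matrix (Fin m) (Fin n) ℝ) (j : Fin n) : ℝ :=
  Real.sqrt ((Matrix.isHermitian_conjTranspose_mul_self A).eigenvalues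
    (Tuple.sort (Matrix.isHermitian_conjTranspose_mul_self A).eigenvalues j.rev))

noncomputable def specNorm {m n : ℕ} (A : Matrix (Fin m) (Fin n) ℝ) : ℝ :=
  sSup (Set.range (sval A))

noncomputable def sMin {m n : ℕ} (A : Matrix (Fin m) (Fin n) ℝ) : ℝ :=
  sInf (Set.range (sval A))

noncomputable def frob {m n : ℕ} (A : Matrix (Fin m) (Fin n) ℝ) : ℝ :=
  Real.sqrt (∑ i, ∑ j, (A i j)^2)

noncomputable def enorm {m : ℕ} (x : Fin m → ℝ) : ℝ := Real.sqrt (∑ i, (x i)^2)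

def UpperTri {k n : ℕ} (R : Matrix (Fin k) (Fin n) ℝ) : Prop :=
  ∀ (i : Fin k) (j : Fin n), (j : ℕ) < (i : ℕ) → R i j = 0

def lead {k n : ℕ} (R : Matrix (Fin k) (Fin n) ℝ) (ℓ : ℕ) (h1 : ℓ ≤ k) (h2 : ℓ ≤ n) :
    Matrix (Fin ℓ) (Fin ℓ) ℝ := fun i j => R (Fin.castLE h1 i) (Fin.castLE h2 j)

def topRight {k n : ℕ} (R : Matrix (Fin k) (Fin n) ℝ) (ℓ : ℕ) (h1 : ℓ ≤ k) :
    Matrix (Fin ℓ) (Fin (n - ℓ)) ℝ :=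
  fun i j => R (Fin.castLE h1 i) ⟨ℓ + j.1, by have := j.isLt; omega⟩

def trail {k n : ℕ} (R : Matrix (Fin k) (Fin n) ℝ) (ℓ : ℕ) :
    Matrix (Fin (k - ℓ)) (Fin (n - ℓ)) ℝ :=
  fun i j => R ⟨ℓ + i.1, by have := i.isLt; omega⟩ ⟨ℓ + j.1, by have := j.isLt; omega⟩

section CourantFischer

variable {n : ℕ}

private lemma quad_eq (A : Matrix (Fin n) (Fin n) ℝ)
    (v : OrthonormalBasis (Fin n) ℝ (EuclideanSpace ℝ (Fin n))) (μ : Fin n → ℝ)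
    (hv : ∀ i, A.mulVec (v i) = μ i • (v i : Fin n → ℝ)) (x : EuclideanSpace ℝ (Fin n)) :
    (x : Fin n → ℝ) ⬝ᵥ (A *ᵥ x) = ∑ i, μ i * (inner ℝ (v i) x : ℝ)^2 := by
  have hx : (x : EuclideanSpace ℝ (Fin n)) = ∑ i, (inner ℝ (v i) x : ℝ) • v i :=
    (v.sum_repr' x).symm
  have hAx : A *ᵥ (x : Fin n → ℝ) = ∑ i, ((inner ℝ (v i) x : ℝ) * μ i) • (v i : Fin n → ℝ) := by
    have h2 : A.mulVecLin x = A.mulVecLin (∑ i, (inner ℝ (v i) x : ℝ) • (v i : EuclideanSpace ℝ (Fin n))) := by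
      congr 1; nth_rewrite 1 [hx]; simp only [WithLp.ofLp_sum, WithLp.ofLp_smul]
    simp only [map_sum, LinearMap.map_smul, Matrix.mulVecLin_apply] at h2
    rw [h2]
    refine Finset.sum_congr rfl fun i _ => ?_
    rw [hv i, smul_smul]
  have hdot : ∀ i, (x : Fin n → ℝ) ⬝ᵥ (v i : Fin n → ℝ) = (inner ℝ (v i) x : ℝ) := by
    intro i
    rw [dotProduct_comm]
    simp [PiLp.inner_apply, dotProduct, RCLike.inner_apply, mul_comm]
  rw [hAx]
  have : (x : Fin n → ℝ) ⬝ᵥ (∑ i, ((inner ℝ (v i) x : ℝ) * μ i) • (v i : Fin n → ℝ))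
      = ∑ i, ((inner ℝ (v i) x : ℝ) * μ i) * ((x : Fin n → ℝ) ⬝ᵥ (v i : Fin n → ℝ)) := by
    simp [dotProduct, Finset.mul_sum]
    rw [Finset.sum_comm]
    refine Finset.sum_congr rfl fun i _ => Finset.sum_congr rfl fun j _ => by ring
  rw [this]
  refine Finset.sum_congr rfl fun i _ => ?_
  rw [hdot i]; ring

private lemma inner_zero_of_mem_span (v : OrthonormalBasis (Fin n) ℝ (EuclideanSpace ℝ (Fin n)))
    (s : Finset (Fin n)) {i : Fin n} (hi : i ∉ s) {x : EuclideanSpace ℝ (Fin n)}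
    (hx : x ∈ Submodule.span ℝ (v '' s)) : (inner ℝ (v i) x : ℝ) = 0 := by
  induction hx using Submodule.span_induction with
  | mem y hy =>
      obtain ⟨j, hj, rfl⟩ := hy
      exact v.orthonormal.2 (fun h => hi (h ▸ hj))
  | zero => simp
  | add y z _ _ hy hz => rw [inner_add_right, hy, hz]; ring
  | smul a y _ hy => rw [inner_smul_right, hy]; simp

private lemma norm_sq_dot (x : EuclideanSpace ℝ (Fin n)) (v : OrthonormalBasis (Fin n) ℝ (EuclideanSpace ℝ (Fin n))) :
    (x : Fin n → ℝ) ⬝ᵥ (x : Fin n → ℝ) = ∑ i, (inner ℝ (v i) x : ℝ)^2 := by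
  have := quad_eq (1 : Matrix (Fin n) (Fin n) ℝ) v (fun _ => 1)
    (fun i => by rw [one_mulVec, one_smul]) x
  simpa using this

private lemma quad_ge (A : Matrix (Fin n) (Fin n) ℝ)
    (v : OrthonormalBasis (Fin n) ℝ (EuclideanSpace ℝ (Fin n))) (μ : Fin n → ℝ)
    (hv : ∀ i, A.mulVec (v i) = μ i • (v i : Fin n → ℝ)) (s : Finset (Fin n)) (c : ℝ)
    (hμ : ∀ i ∈ s, c ≤ μ i) {x : EuclideanSpace ℝ (Fin n)}
    (hx : x ∈ Submodule.span ℝ (v '' s)) :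
    c * ((x : Fin n → ℝ) ⬝ᵥ (x : Fin n → ℝ)) ≤ (x : Fin n → ℝ) ⬝ᵥ (A *ᵥ x) := by
  rw [quad_eq A v μ hv x, norm_sq_dot x v, Finset.mul_sum]
  refine Finset.sum_le_sum fun i _ => ?_
  by_cases his : i ∈ s
  · exact mul_le_mul_of_nonneg_right (hμ i his) (sq_nonneg _)
  · rw [inner_zero_of_mem_span v s his hx]; simp

private lemma quad_le (A : Matrix (Fin n) (Fin n) ℝ)
    (v : OrthonormalBasis (Fin n) ℝ (EuclideanSpace ℝ (Fin n))) (μ : Fin n → ℝ)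
    (hv : ∀ i, A.mulVec (v i) = μ i • (v i : Fin n → ℝ)) (s : Finset (Fin n)) (c : ℝ)
    (hμ : ∀ i ∈ s, μ i ≤ c) {x : EuclideanSpace ℝ (Fin n)}
    (hx : x ∈ Submodule.span ℝ (v '' s)) :
    (x : Fin n → ℝ) ⬝ᵥ (A *ᵥ x) ≤ c * ((x : Fin n → ℝ) ⬝ᵥ (x : Fin n → ℝ)) := by
  rw [quad_eq A v μ hv x, norm_sq_dot x v, Finset.mul_sum]
  refine Finset.sum_le_sum fun i _ => ?_
  by_cases his : i ∈ s
  · exact mul_le_mul_of_nonneg_right (hμ i his) (sq_nonneg _)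
  · rw [inner_zero_of_mem_span v s his hx]; simp

private lemma finrank_span_image (v : OrthonormalBasis (Fin n) ℝ (EuclideanSpace ℝ (Fin n)))
    (s : Finset (Fin n)) :
    Module.finrank ℝ (Submodule.span ℝ (v '' s)) = s.card := by
  have li : LinearIndependent ℝ (fun i : {x // x ∈ s} => v (i : Fin n)) :=
    v.orthonormal.linearIndependent.comp _ Subtype.val_injective
  have h := finrank_span_eq_card li
  have hr : (Set.range fun i : {x // x ∈ s} => v (i : Fin n)) = v '' s := by
    ext y; simp [Set.mem_image]
  rw [hr] at h
  simpa using h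

noncomputable def sortedEig {A : Matrix (Fin n) (Fin n) ℝ} (hA : A.IsHermitian) : Fin n → ℝ :=
  fun k => hA.eigenvalues (Tuple.sort hA.eigenvalues k)

private lemma exists_common (VA VB : Submodule ℝ (EuclideanSpace ℝ (Fin n))) (k : Fin n)
    (hdimA : Module.finrank ℝ VA = n - k.1) (hdimB : Module.finrank ℝ VB = k.1 + 1) :
    ∃ x : EuclideanSpace ℝ (Fin n), x ∈ VA ∧ x ∈ VB ∧ x ≠ 0 := by
  have hne : VA ⊓ VB ≠ ⊥ := by
    intro hbot
    have hsum := Submodule.finrank_sup_add_finrank_inf_eq VA VB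
    rw [hbot] at hsum
    have hle : Module.finrank ℝ (VA ⊔ VB : Submodule ℝ (EuclideanSpace ℝ (Fin n))) ≤ n := by
      have := Submodule.finrank_le (VA ⊔ VB)
      simpa using this
    rw [hdimA, hdimB] at hsum
    simp [finrank_bot] at hsum
    have := k.isLt
    omega
  obtain ⟨x, hxmem, hxne⟩ := Submodule.exists_mem_ne_zero_of_ne_bot hne
  exact ⟨x, hxmem.1, hxmem.2, hxne⟩

private lemma dot_self_pos {x : EuclideanSpace ℝ (Fin n)} (hxne : x ≠ 0) :
    (0 : ℝ) < (x : Fin n → ℝ) ⬝ᵥ x := by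
  have hx0 : (x : Fin n → ℝ) ≠ 0 := fun hh => hxne (by ext i; exact congrFun hh i)
  have : 0 < ∑ i, (x : Fin n → ℝ) i * (x : Fin n → ℝ) i := by
    obtain ⟨i, hi⟩ := Function.ne_iff.1 hx0
    refine Finset.sum_pos' (fun j _ => mul_self_nonneg _) ⟨i, Finset.mem_univ i, ?_⟩
    exact mul_self_pos.mpr hi
  simpa [dotProduct] using this

private lemma sortedEig_mono {A B : Matrix (Fin n) (Fin n) ℝ} (hA : A.IsHermitian) (hB : B.IsHermitian)
    (c : ℝ) (hc : 0 ≤ c)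
    (h : ∀ x : Fin n → ℝ, c * (x ⬝ᵥ (A *ᵥ x)) ≤ x ⬝ᵥ (B *ᵥ x)) (k : Fin n) :
    c * sortedEig hA k ≤ sortedEig hB k := by
  set σA := Tuple.sort hA.eigenvalues with hσA
  set σB := Tuple.sort hB.eigenvalues with hσB
  set vA : OrthonormalBasis (Fin n) ℝ (EuclideanSpace ℝ (Fin n)) := hA.eigenvectorBasis.reindex σA.symm
  set vB : OrthonormalBasis (Fin n) ℝ (EuclideanSpace ℝ (Fin n)) := hB.eigenvectorBasis.reindex σB.symm
  have hvA : ∀ i, A.mulVec (vA i) = sortedEig hA i • (vA i : Fin n → ℝ) := by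
    intro i
    have := hA.mulVec_eigenvectorBasis (σA i)
    simpa [vA, OrthonormalBasis.reindex_apply, sortedEig] using this
  have hvB : ∀ i, B.mulVec (vB i) = sortedEig hB i • (vB i : Fin n → ℝ) := by
    intro i
    have := hB.mulVec_eigenvectorBasis (σB i)
    simpa [vB, OrthonormalBasis.reindex_apply, sortedEig] using this
  obtain ⟨x, hxA, hxB, hxne⟩ := exists_common
    (Submodule.span ℝ (vA '' (Finset.Ici k))) (Submodule.span ℝ (vB '' (Finset.Iic k))) k
    (by rw [finrank_span_image, Fin.card_Ici]) (by rw [finrank_span_image, Fin.card_Iic])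
  have hAq : sortedEig hA k * ((x : Fin n → ℝ) ⬝ᵥ x) ≤ (x : Fin n → ℝ) ⬝ᵥ (A *ᵥ x) :=
    quad_ge A vA (sortedEig hA) hvA _ _ (fun i hi => by
      have : k ≤ i := by simpa using hi
      exact (Tuple.monotone_sort hA.eigenvalues) this) hxA
  have hBq : (x : Fin n → ℝ) ⬝ᵥ (B *ᵥ x) ≤ sortedEig hB k * ((x : Fin n → ℝ) ⬝ᵥ x) :=
    quad_le B vB (sortedEig hB) hvB _ _ (fun i hi => by
      have : i ≤ k := by simpa using hi
      exact (Tuple.monotone_sort hB.eigenvalues) this) hxB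
  have key : c * (sortedEig hA k * ((x : Fin n → ℝ) ⬝ᵥ x)) ≤ sortedEig hB k * ((x : Fin n → ℝ) ⬝ᵥ x) :=
    le_trans (mul_le_mul_of_nonneg_left hAq hc) (le_trans (h x) hBq)
  rw [← mul_assoc] at key
  exact le_of_mul_le_mul_right key (dot_self_pos hxne)

private lemma sortedEig_mono' {A B : Matrix (Fin n) (Fin n) ℝ} (hA : A.IsHermitian) (hB : B.IsHermitian)
    (c : ℝ) (hc : 0 ≤ c)
    (h : ∀ x : Fin n → ℝ, x ⬝ᵥ (A *ᵥ x) ≤ c * (x ⬝ᵥ (B *ᵥ x))) (k : Fin n) :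
    sortedEig hA k ≤ c * sortedEig hB k := by
  set σA := Tuple.sort hA.eigenvalues with hσA
  set σB := Tuple.sort hB.eigenvalues with hσB
  set vA : OrthonormalBasis (Fin n) ℝ (EuclideanSpace ℝ (Fin n)) := hA.eigenvectorBasis.reindex σA.symm
  set vB : OrthonormalBasis (Fin n) ℝ (EuclideanSpace ℝ (Fin n)) := hB.eigenvectorBasis.reindex σB.symm
  have hvA : ∀ i, A.mulVec (vA i) = sortedEig hA i • (vA i : Fin n → ℝ) := by
    intro i
    have := hA.mulVec_eigenvectorBasis (σA i)
    simpa [vA, OrthonormalBasis.reindex_apply, sortedEig] using this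
  have hvB : ∀ i, B.mulVec (vB i) = sortedEig hB i • (vB i : Fin n → ℝ) := by
    intro i
    have := hB.mulVec_eigenvectorBasis (σB i)
    simpa [vB, OrthonormalBasis.reindex_apply, sortedEig] using this
  obtain ⟨x, hxA, hxB, hxne⟩ := exists_common
    (Submodule.span ℝ (vA '' (Finset.Ici k))) (Submodule.span ℝ (vB '' (Finset.Iic k))) k
    (by rw [finrank_span_image, Fin.card_Ici]) (by rw [finrank_span_image, Fin.card_Iic])
  have hAq : sortedEig hA k * ((x : Fin n → ℝ) ⬝ᵥ x) ≤ (x : Fin n → ℝ) ⬝ᵥ (A *ᵥ x) :=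
    quad_ge A vA (sortedEig hA) hvA _ _ (fun i hi => by
      have : k ≤ i := by simpa using hi
      exact (Tuple.monotone_sort hA.eigenvalues) this) hxA
  have hBq : (x : Fin n → ℝ) ⬝ᵥ (B *ᵥ x) ≤ sortedEig hB k * ((x : Fin n → ℝ) ⬝ᵥ x) :=
    quad_le B vB (sortedEig hB) hvB _ _ (fun i hi => by
      have : i ≤ k := by simpa using hi
      exact (Tuple.monotone_sort hB.eigenvalues) this) hxB
  have key : sortedEig hA k * ((x : Fin n → ℝ) ⬝ᵥ x) ≤ c * (sortedEig hB k * ((x : Fin n → ℝ) ⬝ᵥ x)) :=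
    le_trans hAq (le_trans (h x) (mul_le_mul_of_nonneg_left hBq hc))
  rw [← mul_assoc] at key
  exact le_of_mul_le_mul_right key (dot_self_pos hxne)

end CourantFischer
theorem embedding_preserves_singular_values {m d n p : ℕ}
    (δ : ℝ) (hδ0 : 0 ≤ δ) (hδ1 : δ < 1)
    (U : Matrix (Fin m) (Fin n) ℝ) (hU : Uᵀ * U = 1)
    (S : Matrix (Fin d) (Fin m) ℝ)
    (hemb : ∀ j : Fin n, 1 - δ ≤ sval (S * U) j ∧ sval (S * U) j ≤ 1 + δ)
    (M : Matrix (Fin m) (Fin p) ℝ)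
    (hrange : LinearMap.range M.mulVecLin ≤ LinearMap.range U.mulVecLin) :
    ∀ j : Fin p, (1 - δ) * sval M j ≤ sval (S * M) j ∧
      sval (S * M) j ≤ (1 + δ) * sval M j := by
  have hδ1' : (0:ℝ) ≤ 1 - δ := by linarith
  have hδ2' : (0:ℝ) ≤ 1 + δ := by linarith
  set B := S * U with hB
  set hG : ((B)ᴴ * B).IsHermitian := Matrix.isHermitian_conjTranspose_mul_self B with hGdef
  -- eigenvalue bounds for G = BᴴB
  have hlam0 : ∀ i, 0 ≤ hG.eigenvalues i := fun i =>
    Matrix.eigenvalues_conjTranspose_mul_self_nonneg B i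
  have hlamlo : ∀ i, (1 - δ)^2 ≤ hG.eigenvalues i := by
    intro i
    set k : Fin n := ((Tuple.sort hG.eigenvalues).symm i).rev with hk
    have hsv : sval B k = Real.sqrt (hG.eigenvalues i) := by
      show Real.sqrt (hG.eigenvalues (Tuple.sort hG.eigenvalues k.rev)) = _
      rw [hk, Fin.rev_rev, Equiv.apply_symm_apply]
    have h1 := (hemb k).1
    rw [hsv] at h1
    calc (1 - δ)^2 ≤ (Real.sqrt (hG.eigenvalues i))^2 :=
          pow_le_pow_left₀ hδ1' h1 2
      _ = hG.eigenvalues i := Real.sq_sqrt (hlam0 i)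
  have hlamhi : ∀ i, hG.eigenvalues i ≤ (1 + δ)^2 := by
    intro i
    set k : Fin n := ((Tuple.sort hG.eigenvalues).symm i).rev with hk
    have hsv : sval B k = Real.sqrt (hG.eigenvalues i) := by
      show Real.sqrt (hG.eigenvalues (Tuple.sort hG.eigenvalues k.rev)) = _
      rw [hk, Fin.rev_rev, Equiv.apply_symm_apply]
    have h1 := (hemb k).2
    rw [hsv] at h1
    calc hG.eigenvalues i = (Real.sqrt (hG.eigenvalues i))^2 := (Real.sq_sqrt (hlam0 i)).symm
      _ ≤ (1 + δ)^2 := pow_le_pow_left₀ (Real.sqrt_nonneg _) h1 2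
  -- quadratic bounds for G
  have hmemtop : ∀ z : EuclideanSpace ℝ (Fin n),
      z ∈ Submodule.span ℝ (hG.eigenvectorBasis '' (Finset.univ : Finset (Fin n))) := by
    intro z
    have : (hG.eigenvectorBasis '' (Finset.univ : Finset (Fin n))) = Set.range hG.eigenvectorBasis := by
      simp
    rw [this, ← OrthonormalBasis.coe_toBasis, hG.eigenvectorBasis.toBasis.span_eq]
    trivial
  have hGlo : ∀ z : Fin n → ℝ, (1 - δ)^2 * (z ⬝ᵥ z) ≤ z ⬝ᵥ ((Bᴴ * B) *ᵥ z) := fun z =>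
    quad_ge (Bᴴ * B) hG.eigenvectorBasis hG.eigenvalues
      (fun i => hG.mulVec_eigenvectorBasis i) Finset.univ ((1 - δ)^2)
      (fun i _ => hlamlo i) (hmemtop (WithLp.toLp 2 z))
  have hGhi : ∀ z : Fin n → ℝ, z ⬝ᵥ ((Bᴴ * B) *ᵥ z) ≤ (1 + δ)^2 * (z ⬝ᵥ z) := fun z =>
    quad_le (Bᴴ * B) hG.eigenvectorBasis hG.eigenvalues
      (fun i => hG.mulVec_eigenvectorBasis i) Finset.univ ((1 + δ)^2)
      (fun i _ => hlamhi i) (hmemtop (WithLp.toLp 2 z))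
  -- quadratic form identities
  have hdott : ∀ {a b : ℕ} (A : Matrix (Fin a) (Fin b) ℝ) (x : Fin b → ℝ),
      x ⬝ᵥ ((Aᴴ * A) *ᵥ x) = (A *ᵥ x) ⬝ᵥ (A *ᵥ x) := by
    intro a b A x
    rw [Matrix.conjTranspose_eq_transpose_of_trivial, ← Matrix.mulVec_mulVec,
      Matrix.dotProduct_mulVec, Matrix.vecMul_transpose]
  have hMU : ∀ x : Fin p → ℝ, ∃ z : Fin n → ℝ, U *ᵥ z = M *ᵥ x := by
    intro x
    obtain ⟨z, hz⟩ := hrange ⟨x, rfl⟩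
    exact ⟨z, hz⟩
  have hq : ∀ x : Fin p → ℝ, ∃ z : Fin n → ℝ,
      x ⬝ᵥ ((Mᴴ * M) *ᵥ x) = z ⬝ᵥ z ∧
      x ⬝ᵥ (((S * M)ᴴ * (S * M)) *ᵥ x) = z ⬝ᵥ ((Bᴴ * B) *ᵥ z) := by
    intro x
    obtain ⟨z, hz⟩ := hMU x
    refine ⟨z, ?_, ?_⟩
    · rw [hdott M x, ← hz, ← hdott U z, Matrix.conjTranspose_eq_transpose_of_trivial,
        hU, Matrix.one_mulVec]
    · rw [hdott (S * M) x, hdott B z]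
      have : (S * M) *ᵥ x = B *ᵥ z := by
        rw [hB, ← Matrix.mulVec_mulVec, ← Matrix.mulVec_mulVec, hz]
      rw [this]
  have hcmp_lo : ∀ x : Fin p → ℝ,
      (1 - δ)^2 * (x ⬝ᵥ ((Mᴴ * M) *ᵥ x)) ≤ x ⬝ᵥ (((S * M)ᴴ * (S * M)) *ᵥ x) := by
    intro x
    obtain ⟨z, h1, h2⟩ := hq x
    rw [h1, h2]
    exact hGlo z
  have hcmp_hi : ∀ x : Fin p → ℝ,
      x ⬝ᵥ (((S * M)ᴴ * (S * M)) *ᵥ x) ≤ (1 + δ)^2 * (x ⬝ᵥ ((Mᴴ * M) *ᵥ x)) := by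
    intro x
    obtain ⟨z, h1, h2⟩ := hq x
    rw [h1, h2]
    exact hGhi z
  intro j
  have lo := sortedEig_mono (Matrix.isHermitian_conjTranspose_mul_self M)
    (Matrix.isHermitian_conjTranspose_mul_self (S * M)) ((1 - δ)^2) (sq_nonneg _) hcmp_lo j.rev
  have hi := sortedEig_mono' (Matrix.isHermitian_conjTranspose_mul_self (S * M))
    (Matrix.isHermitian_conjTranspose_mul_self M) ((1 + δ)^2) (sq_nonneg _) hcmp_hi j.rev
  have hM0 : 0 ≤ sortedEig (Matrix.isHermitian_conjTranspose_mul_self M) j.rev :=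
    Matrix.eigenvalues_conjTranspose_mul_self_nonneg M _
  have hsvalM : sval M j = Real.sqrt (sortedEig (Matrix.isHermitian_conjTranspose_mul_self M) j.rev) := rfl
  have hsvalSM : sval (S * M) j
      = Real.sqrt (sortedEig (Matrix.isHermitian_conjTranspose_mul_self (S * M)) j.rev) := rfl
  constructor
  · rw [hsvalM, hsvalSM]
    calc (1 - δ) * Real.sqrt (sortedEig (Matrix.isHermitian_conjTranspose_mul_self M) j.rev)
        = Real.sqrt ((1 - δ)^2 * sortedEig (Matrix.isHermitian_conjTranspose_mul_self M) j.rev) := by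
          rw [Real.sqrt_mul (sq_nonneg _), Real.sqrt_sq hδ1']
      _ ≤ _ := Real.sqrt_le_sqrt lo
  · rw [hsvalM, hsvalSM]
    calc Real.sqrt (sortedEig (Matrix.isHermitian_conjTranspose_mul_self (S * M)) j.rev)
        ≤ Real.sqrt ((1 + δ)^2 * sortedEig (Matrix.isHermitian_conjTranspose_mul_self M) j.rev) :=
          Real.sqrt_le_sqrt hi
      _ = (1 + δ) * Real.sqrt (sortedEig (Matrix.isHermitian_conjTranspose_mul_self M) j.rev) := by
          rw [Real.sqrt_mul (sq_nonneg _), Real.sqrt_sq hδ2']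
end

section
/- With the same setup as the sketched RRQR proposition (M = QR, SM = Q̂R̂, S a δ-embedding for range(M), R = R̃R̂ with all singular values of R̃ in [(1+δ)⁻¹,(1−δ)⁻¹]), let A_ℓ, B_ℓ (resp. Â_ℓ, B̂_ℓ, Ĉ_ℓ) denote the corresponding blocks of R (resp. R̂). Then ‖A_ℓ⁻¹ B_ℓ‖₂ ≤ ‖Â_ℓ⁻¹ B̂_ℓ‖₂ + ((1+δ)/(1−δ)) · σ_min(Â_ℓ)⁻¹ · ‖Ĉ_ℓ‖₂. -/
open Matrix BigOperators

namespace SRRQRAux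
open Finset

variable {m n p q : ℕ}

noncomputable def ev (A : Matrix (Fin m) (Fin n) ℝ) : Fin n → ℝ :=
  (Matrix.isHermitian_conjTranspose_mul_self A).eigenvalues

lemma ev_nonneg (A : Matrix (Fin m) (Fin n) ℝ) (j : Fin n) : 0 ≤ ev A j :=
  Matrix.eigenvalues_conjTranspose_mul_self_nonneg A j

lemma sval_eq (A : Matrix (Fin m) (Fin n) ℝ) (j : Fin n) :
    sval A j = Real.sqrt (ev A (Tuple.sort (ev A) j.rev)) := rfl

lemma sval_nonneg (A : Matrix (Fin m) (Fin n) ℝ) (j : Fin n) : 0 ≤ sval A j :=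
  Real.sqrt_nonneg _

lemma exists_sval_eq (A : Matrix (Fin m) (Fin n) ℝ) (i : Fin n) :
    ∃ j, sval A j = Real.sqrt (ev A i) := by
  refine ⟨((Tuple.sort (ev A))⁻¹ i).rev, ?_⟩
  rw [sval_eq, Fin.rev_rev]
  simp

lemma sval_le_specNorm (A : Matrix (Fin m) (Fin n) ℝ) (j : Fin n) : sval A j ≤ specNorm A :=
  le_csSup (Set.finite_range _).bddAbove ⟨j, rfl⟩

lemma sMin_le_sval (A : Matrix (Fin m) (Fin n) ℝ) (j : Fin n) : sMin A ≤ sval A j :=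
  csInf_le (Set.finite_range _).bddBelow ⟨j, rfl⟩

lemma specNorm_nonneg (A : Matrix (Fin m) (Fin n) ℝ) : 0 ≤ specNorm A :=
  Real.sSup_nonneg (by rintro x ⟨j, rfl⟩; exact sval_nonneg A j)

lemma sMin_nonneg (A : Matrix (Fin m) (Fin n) ℝ) : 0 ≤ sMin A :=
  Real.sInf_nonneg (by rintro x ⟨j, rfl⟩; exact sval_nonneg A j)

lemma exists_specNorm_eq (hn : 0 < n) (A : Matrix (Fin m) (Fin n) ℝ) :
    ∃ j, specNorm A = sval A j := by
  have : Nonempty (Fin n) := ⟨⟨0, hn⟩⟩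
  obtain ⟨j, hj⟩ := (Set.range_nonempty (sval A)).csSup_mem (Set.finite_range _)
  exact ⟨j, hj.symm⟩

lemma exists_sMin_eq (hn : 0 < n) (A : Matrix (Fin m) (Fin n) ℝ) :
    ∃ j, sMin A = sval A j := by
  have : Nonempty (Fin n) := ⟨⟨0, hn⟩⟩
  obtain ⟨j, hj⟩ := (Set.range_nonempty (sval A)).csInf_mem (Set.finite_range _)
  exact ⟨j, hj.symm⟩


section quad
variable (A : Matrix (Fin m) (Fin n) ℝ)

noncomputable def Uu : Matrix (Fin n) (Fin n) ℝ :=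
  (Matrix.isHermitian_conjTranspose_mul_self A).eigenvectorUnitary

lemma Uu_mul_star : Uu A * star (Uu A) = 1 :=
  Matrix.mem_unitaryGroup_iff.mp (Matrix.IsHermitian.eigenvectorUnitary _).2

lemma star_mul_Uu : star (Uu A) * Uu A = 1 :=
  Matrix.mem_unitaryGroup_iff'.mp (Matrix.IsHermitian.eigenvectorUnitary _).2

lemma spectral : Aᴴ * A = Uu A * Matrix.diagonal (ev A) * star (Uu A) := by
  have h := (Matrix.isHermitian_conjTranspose_mul_self A).spectral_theorem
  simpa [RCLike.ofReal_real_eq_id, Uu, ev] using h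

lemma quad1 (x : Fin n → ℝ) :
    ∑ i, (A *ᵥ x) i ^ 2 = x ⬝ᵥ ((Aᴴ * A) *ᵥ x) := by
  rw [← Matrix.mulVec_mulVec, Matrix.conjTranspose_eq_transpose_of_trivial,
    Matrix.dotProduct_mulVec, Matrix.vecMul_transpose]
  simp [dotProduct, sq]

lemma quad2 (x : Fin n → ℝ) :
    x ⬝ᵥ ((Aᴴ * A) *ᵥ x) = ∑ j, ev A j * (star (Uu A) *ᵥ x) j ^ 2 := by
  conv_lhs => rw [spectral A]
  rw [← Matrix.mulVec_mulVec, ← Matrix.mulVec_mulVec, Matrix.dotProduct_mulVec]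
  have hx : x ᵥ* Uu A = star (Uu A) *ᵥ x := by
    rw [Matrix.star_eq_conjTranspose, Matrix.conjTranspose_eq_transpose_of_trivial,
      Matrix.mulVec_transpose]
  rw [hx]
  simp only [dotProduct, Matrix.mulVec_diagonal]
  exact Finset.sum_congr rfl (fun j _ => by ring)


lemma quad3 (x : Fin n → ℝ) :
    ∑ j, (star (Uu A) *ᵥ x) j ^ 2 = ∑ i, x i ^ 2 := by
  have h : (star (Uu A) *ᵥ x) ⬝ᵥ (star (Uu A) *ᵥ x) = x ⬝ᵥ x := by
    rw [Matrix.dotProduct_mulVec, Matrix.vecMul_mulVec]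
    have h2 : (star (Uu A))ᵀ * star (Uu A) = 1 := by
      rw [Matrix.star_eq_conjTranspose, Matrix.conjTranspose_eq_transpose_of_trivial,
        Matrix.transpose_transpose]
      exact Uu_mul_star A
    rw [h2, Matrix.vecMul_one]
  simpa [dotProduct, sq] using h

end quad

lemma mulVec_sq_le (A : Matrix (Fin m) (Fin n) ℝ) (x : Fin n → ℝ) :
    ∑ i, (A *ᵥ x) i ^ 2 ≤ specNorm A ^ 2 * ∑ i, x i ^ 2 := by
  rw [quad1, quad2, ← quad3 A x, Finset.mul_sum]
  apply Finset.sum_le_sum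
  intro j _
  have h1 : ev A j ≤ specNorm A ^ 2 := by
    obtain ⟨j', hj'⟩ := exists_sval_eq A j
    have h2 := sval_le_specNorm A j'
    nlinarith [sval_nonneg A j', Real.sq_sqrt (ev_nonneg A j), hj']
  nlinarith [sq_nonneg ((star (Uu A) *ᵥ x) j)]

lemma sMin_sq_le_mulVec (A : Matrix (Fin m) (Fin n) ℝ) (x : Fin n → ℝ) :
    sMin A ^ 2 * ∑ i, x i ^ 2 ≤ ∑ i, (A *ᵥ x) i ^ 2 := by
  rw [quad1, quad2, ← quad3 A x, Finset.mul_sum]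
  apply Finset.sum_le_sum
  intro j _
  have h1 : sMin A ^ 2 ≤ ev A j := by
    obtain ⟨j', hj'⟩ := exists_sval_eq A j
    have h2 := sMin_le_sval A j'
    nlinarith [sMin_nonneg A, Real.sq_sqrt (ev_nonneg A j), hj']
  nlinarith [sq_nonneg ((star (Uu A) *ᵥ x) j)]

lemma exists_unit_attain (hn : 0 < n) (A : Matrix (Fin m) (Fin n) ℝ) :
    ∃ v : Fin n → ℝ, ∑ i, v i ^ 2 = 1 ∧ specNorm A ^ 2 = ∑ i, (A *ᵥ v) i ^ 2 := by
  obtain ⟨j, hj⟩ := exists_specNorm_eq hn A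
  set i0 := Tuple.sort (ev A) j.rev with hi0
  refine ⟨Uu A *ᵥ Pi.single i0 1, ?_, ?_⟩
  · rw [← quad3 A, Matrix.mulVec_mulVec, star_mul_Uu, Matrix.one_mulVec]
    simp [Pi.single_apply, sq]
  · rw [quad1, quad2, Matrix.mulVec_mulVec, star_mul_Uu, Matrix.one_mulVec]
    have : ∀ j' : Fin n, ev A j' * (Pi.single i0 1 : Fin n → ℝ) j' ^ 2
        = if j' = i0 then ev A i0 else 0 := by
      intro j'
      by_cases h : j' = i0 <;> simp [h, Pi.single_apply]
    rw [Finset.sum_congr rfl (fun j' _ => this j'), Finset.sum_ite_eq' Finset.univ i0]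
    simp only [Finset.mem_univ, if_true]
    rw [hj, sval_eq, Real.sq_sqrt (ev_nonneg A _)]

lemma specNorm_le_of_forall (hn : 0 < n) (A : Matrix (Fin m) (Fin n) ℝ) (c : ℝ) (hc : 0 ≤ c)
    (h : ∀ v : Fin n → ℝ, ∑ i, v i ^ 2 = 1 → ∑ i, (A *ᵥ v) i ^ 2 ≤ c ^ 2) :
    specNorm A ≤ c := by
  obtain ⟨v, hv1, hv2⟩ := exists_unit_attain hn A
  have h2 : specNorm A ^ 2 ≤ c ^ 2 := hv2 ▸ h v hv1
  calc specNorm A = Real.sqrt (specNorm A ^ 2) := (Real.sqrt_sq (specNorm_nonneg A)).symm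
    _ ≤ Real.sqrt (c ^ 2) := Real.sqrt_le_sqrt h2
    _ = c := Real.sqrt_sq hc

lemma specNorm_mul_le (A : Matrix (Fin m) (Fin n) ℝ) (B : Matrix (Fin n) (Fin q) ℝ)
    (hq : 0 < q) : specNorm (A * B) ≤ specNorm A * specNorm B := by
  apply specNorm_le_of_forall hq _ _ (mul_nonneg (specNorm_nonneg A) (specNorm_nonneg B))
  intro v hv
  rw [← Matrix.mulVec_mulVec]
  have h1 := mulVec_sq_le A (B *ᵥ v)
  have h2 := mulVec_sq_le B v
  rw [hv, mul_one] at h2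
  have h3 : ∑ i, (B *ᵥ v) i ^ 2 ≥ 0 := Finset.sum_nonneg (fun i _ => sq_nonneg _)
  nlinarith [specNorm_nonneg A, specNorm_nonneg B]

lemma specNorm_add_le (A B : Matrix (Fin m) (Fin n) ℝ) (hn : 0 < n) :
    specNorm (A + B) ≤ specNorm A + specNorm B := by
  apply specNorm_le_of_forall hn _ _ (add_nonneg (specNorm_nonneg A) (specNorm_nonneg B))
  intro v hv
  rw [Matrix.add_mulVec]
  set a := A *ᵥ v
  set b := B *ᵥ v
  have ha : ∑ i, a i ^ 2 ≤ specNorm A ^ 2 := by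
    have := mulVec_sq_le A v; rwa [hv, mul_one] at this
  have hb : ∑ i, b i ^ 2 ≤ specNorm B ^ 2 := by
    have := mulVec_sq_le B v; rwa [hv, mul_one] at this
  have hcs : (∑ i, a i * b i) ^ 2 ≤ (∑ i, a i ^ 2) * ∑ i, b i ^ 2 :=
    Finset.sum_mul_sq_le_sq_mul_sq Finset.univ a b
  have hab : ∑ i, a i * b i ≤ specNorm A * specNorm B := by
    nlinarith [Finset.sum_nonneg (fun i (_ : i ∈ Finset.univ) => sq_nonneg (a i)),
      Finset.sum_nonneg (fun i (_ : i ∈ Finset.univ) => sq_nonneg (b i)),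
      specNorm_nonneg A, specNorm_nonneg B,
      mul_nonneg (specNorm_nonneg A) (specNorm_nonneg B)]
  have hexp : ∑ i, (a i + b i) ^ 2
      = ∑ i, a i ^ 2 + 2 * (∑ i, a i * b i) + ∑ i, b i ^ 2 := by
    rw [Finset.mul_sum, ← Finset.sum_add_distrib, ← Finset.sum_add_distrib]
    exact Finset.sum_congr rfl (fun i _ => by ring)
  have : (fun i => a i + b i) = a + b := rfl
  calc ∑ i, (a + b) i ^ 2 = ∑ i, (a i + b i) ^ 2 := rfl
    _ ≤ specNorm A ^ 2 + 2 * (specNorm A * specNorm B) + specNorm B ^ 2 := by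
        rw [hexp]; linarith
    _ = (specNorm A + specNorm B) ^ 2 := by ring

lemma specNorm_submatrix_le (M : Matrix (Fin m) (Fin n) ℝ) (f : Fin p → Fin m)
    (g : Fin q → Fin n) (hf : Function.Injective f) (hg : Function.Injective g) (hq : 0 < q) :
    specNorm (M.submatrix f g) ≤ specNorm M := by
  apply specNorm_le_of_forall hq _ _ (specNorm_nonneg M)
  intro v hv
  classical
  set x : Fin n → ℝ := Function.extend g v (fun _ => 0) with hxdef
  have hx_at : ∀ t, x (g t) = v t := fun t => hg.extend_apply v (fun _ => 0) t
  have hx_not : ∀ j, j ∉ Finset.univ.image g → x j = 0 := by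
    intro j hj
    apply Function.extend_apply' v (fun _ => 0) j
    rintro ⟨t, ht⟩
    exact hj (Finset.mem_image.mpr ⟨t, Finset.mem_univ t, ht⟩)
  have hxsum : ∑ j, x j ^ 2 = 1 := by
    rw [← hv]
    have h1 : ∑ j : Fin n, x j ^ 2 = ∑ j ∈ Finset.univ.image g, x j ^ 2 :=
      (Finset.sum_subset (Finset.subset_univ _) (fun j _ hj => by
        rw [hx_not j hj]; norm_num)).symm
    rw [h1, Finset.sum_image (fun a _ b _ hab => hg hab)]
    exact Finset.sum_congr rfl (fun t _ => by rw [hx_at])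
  have hmv : ∀ i, (M.submatrix f g *ᵥ v) i = (M *ᵥ x) (f i) := by
    intro i
    simp only [Matrix.mulVec, Matrix.submatrix_apply, dotProduct]
    have h1 : ∑ j : Fin n, M (f i) j * x j = ∑ j ∈ Finset.univ.image g, M (f i) j * x j :=
      (Finset.sum_subset (Finset.subset_univ _) (fun j _ hj => by
        rw [hx_not j hj, mul_zero])).symm
    rw [h1, Finset.sum_image (fun a _ b _ hab => hg hab)]
    exact Finset.sum_congr rfl (fun t _ => by rw [hx_at])
  calc ∑ i, (M.submatrix f g *ᵥ v) i ^ 2 = ∑ i, (M *ᵥ x) (f i) ^ 2 := by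
        exact Finset.sum_congr rfl (fun i _ => by rw [hmv])
    _ = ∑ i ∈ Finset.univ.image f, (M *ᵥ x) i ^ 2 :=
        (Finset.sum_image (f := fun i => (M *ᵥ x) i ^ 2) (fun a _ b _ hab => hf hab)).symm
    _ ≤ ∑ i, (M *ᵥ x) i ^ 2 :=
        Finset.sum_le_sum_of_subset_of_nonneg (Finset.subset_univ _)
          (fun i _ _ => sq_nonneg _)
    _ ≤ specNorm M ^ 2 * ∑ j, x j ^ 2 := mulVec_sq_le M x
    _ = specNorm M ^ 2 := by rw [hxsum, mul_one]

lemma isUnit_det_of_sval_pos (A : Matrix (Fin p) (Fin p) ℝ) (h : ∀ j, 0 < sval A j) :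
    IsUnit A.det := by
  rw [isUnit_iff_ne_zero]
  intro hdet
  have h1 : A.det * A.det = ∏ i, ev A i := by
    have h0 := (Matrix.isHermitian_conjTranspose_mul_self A).det_eq_prod_eigenvalues
    rw [Matrix.det_mul, Matrix.det_conjTranspose] at h0
    simpa [ev, RCLike.ofReal_real_eq_id] using h0
  have hprod : ∏ i, ev A i = 0 := by rw [← h1, hdet, mul_zero]
  obtain ⟨i, _, hi⟩ := Finset.prod_eq_zero_iff.mp hprod
  obtain ⟨j, hj⟩ := exists_sval_eq A i
  have := h j
  rw [hj, hi, Real.sqrt_zero] at this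
  exact lt_irrefl 0 this

lemma sMin_pos (A : Matrix (Fin p) (Fin p) ℝ) (hp : 0 < p) (hA : IsUnit A.det) :
    0 < sMin A := by
  have hev : ∀ i, 0 < ev A i := by
    intro i
    rcases (ev_nonneg A i).lt_or_eq with h | h
    · exact h
    · exfalso
      have h1 : A.det * A.det = ∏ i, ev A i := by
        have h0 := (Matrix.isHermitian_conjTranspose_mul_self A).det_eq_prod_eigenvalues
        rw [Matrix.det_mul, Matrix.det_conjTranspose] at h0
        simpa [ev, RCLike.ofReal_real_eq_id] using h0
      have h2 : (∏ i, ev A i) = 0 := Finset.prod_eq_zero (Finset.mem_univ i) h.symm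
      exact mul_ne_zero hA.ne_zero hA.ne_zero (h1.trans h2)
  obtain ⟨j, hj⟩ := exists_sMin_eq hp A
  rw [hj, sval_eq]
  exact Real.sqrt_pos.mpr (hev _)

lemma specNorm_inv_le (A : Matrix (Fin p) (Fin p) ℝ) (hp : 0 < p) (hA : IsUnit A.det) :
    specNorm A⁻¹ ≤ (sMin A)⁻¹ := by
  have h0 := sMin_pos A hp hA
  obtain ⟨v, hv1, hv2⟩ := exists_unit_attain hp A⁻¹
  set w := A⁻¹ *ᵥ v with hw
  have hAw : A *ᵥ w = v := by
    rw [hw, Matrix.mulVec_mulVec, Matrix.mul_nonsing_inv _ hA, Matrix.one_mulVec]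
  have h2 : sMin A ^ 2 * ∑ i, w i ^ 2 ≤ 1 := by
    have := sMin_sq_le_mulVec A w
    rwa [hAw, hv1] at this
  have key : specNorm A⁻¹ * sMin A ≤ 1 := by
    nlinarith [specNorm_nonneg A⁻¹, sq_nonneg (specNorm A⁻¹ * sMin A - 1),
      mul_nonneg (specNorm_nonneg A⁻¹) h0.le]
  rw [← mul_le_mul_iff_of_pos_right h0, inv_mul_cancel₀ h0.ne']
  exact key

lemma sum_split {k ℓ : ℕ} (h : ℓ ≤ k) (f : Fin k → ℝ) :
    ∑ i, f i = (∑ i : Fin ℓ, f (Fin.castLE h i))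
      + ∑ i : Fin (k - ℓ), f ⟨ℓ + i.1, by omega⟩ := by
  classical
  set g : ℕ → ℝ := fun j => if hj : j < k then f ⟨j, hj⟩ else 0 with hg
  have h1 : ∑ i : Fin k, f i = ∑ j ∈ Finset.range k, g j := by
    rw [← Fin.sum_univ_eq_sum_range]
    exact Finset.sum_congr rfl (fun i _ => by simp [hg, i.isLt])
  have h2 : ∑ i : Fin ℓ, f (Fin.castLE h i) = ∑ j ∈ Finset.range ℓ, g j := by
    rw [← Fin.sum_univ_eq_sum_range]
    refine Finset.sum_congr rfl (fun i _ => ?_)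
    have hik : (i : ℕ) < k := lt_of_lt_of_le i.isLt h
    simp only [hg, hik, dif_pos]
    rfl
  have h3 : ∑ i : Fin (k - ℓ), f ⟨ℓ + i.1, by omega⟩
      = ∑ j ∈ Finset.range (k - ℓ), g (ℓ + j) := by
    rw [← Fin.sum_univ_eq_sum_range]
    refine Finset.sum_congr rfl (fun i _ => ?_)
    have hik : ℓ + (i : ℕ) < k := by omega
    simp only [hg, hik, dif_pos]
  rw [h1, h2, h3]
  have hk : k = ℓ + (k - ℓ) := by omega
  rw [hk, Finset.sum_range_add]
  simp [Nat.add_sub_cancel_left]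

lemma lead_mul {k n ℓ : ℕ} (h1 : ℓ ≤ k) (h2 : ℓ ≤ n) (X : Matrix (Fin k) (Fin k) ℝ)
    (Y : Matrix (Fin k) (Fin n) ℝ) (hY : UpperTri Y) :
    lead (X * Y) ℓ h1 h2 = lead X ℓ h1 h1 * lead Y ℓ h1 h2 := by
  ext i j
  show (X * Y) (Fin.castLE h1 i) (Fin.castLE h2 j)
    = ∑ m : Fin ℓ, X (Fin.castLE h1 i) (Fin.castLE h1 m) * Y (Fin.castLE h1 m) (Fin.castLE h2 j)
  rw [Matrix.mul_apply, sum_split h1]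
  have hz : ∀ t : Fin (k - ℓ), t ∈ Finset.univ → X (Fin.castLE h1 i) (⟨ℓ + t.1, by omega⟩ : Fin k)
      * Y (⟨ℓ + t.1, by omega⟩ : Fin k) (Fin.castLE h2 j) = 0 := by
    intro t _
    rw [hY (⟨ℓ + t.1, by omega⟩ : Fin k) (Fin.castLE h2 j)
      (by simp only [Fin.coe_castLE]; omega), mul_zero]
  rw [Finset.sum_eq_zero hz, add_zero]

lemma topRight_mul {k n ℓ : ℕ} (h1 : ℓ ≤ k) (X : Matrix (Fin k) (Fin k) ℝ)
    (Y : Matrix (Fin k) (Fin n) ℝ) :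
    topRight (X * Y) ℓ h1
      = lead X ℓ h1 h1 * topRight Y ℓ h1 + topRight X ℓ h1 * trail Y ℓ := by
  ext i j
  show (X * Y) (Fin.castLE h1 i) (⟨ℓ + j.1, by omega⟩ : Fin n) = _
  rw [Matrix.mul_apply, sum_split h1]
  rfl

lemma lead_one {k ℓ : ℕ} (h1 : ℓ ≤ k) :
    lead (1 : Matrix (Fin k) (Fin k) ℝ) ℓ h1 h1 = 1 := by
  ext i j
  show (1 : Matrix (Fin k) (Fin k) ℝ) (Fin.castLE h1 i) (Fin.castLE h1 j)
    = (1 : Matrix (Fin ℓ) (Fin ℓ) ℝ) i j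
  simp [Matrix.one_apply, Fin.castLE_inj]

end SRRQRAux

open SRRQRAux in
theorem srrqr_offdiag_bound {k n ℓ : ℕ} (hℓ : 0 < ℓ) (hℓk : ℓ < k) (hkn : k ≤ n)
    (δ : ℝ) (hδ0 : 0 ≤ δ) (hδ1 : δ < 1)
    (Rt : Matrix (Fin k) (Fin k) ℝ) (Rh : Matrix (Fin k) (Fin n) ℝ)
    (hRt : UpperTri Rt) (hRh : UpperTri Rh)
    (hsv : ∀ j : Fin k, (1 + δ)⁻¹ ≤ sval Rt j ∧ sval Rt j ≤ (1 - δ)⁻¹)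
    (hAh : IsUnit (lead Rh ℓ hℓk.le (hℓk.le.trans hkn)).det) :
    specNorm ((lead (Rt * Rh) ℓ hℓk.le (hℓk.le.trans hkn))⁻¹ * topRight (Rt * Rh) ℓ hℓk.le)
      ≤ specNorm ((lead Rh ℓ hℓk.le (hℓk.le.trans hkn))⁻¹ * topRight Rh ℓ hℓk.le)
        + ((1 + δ) / (1 - δ)) * (sMin (lead Rh ℓ hℓk.le (hℓk.le.trans hkn)))⁻¹
          * specNorm (trail Rh ℓ) := by
  have h1 : ℓ ≤ k := hℓk.le
  have h2 : ℓ ≤ n := hℓk.le.trans hkn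
  have hkpos : 0 < k := hℓ.trans hℓk
  have hklpos : 0 < k - ℓ := by omega
  have hnlpos : 0 < n - ℓ := by omega
  have hδ1' : 0 < 1 - δ := by linarith
  have hδ0' : 0 < 1 + δ := by linarith
  have hNE : Nonempty (Fin k) := ⟨⟨0, hkpos⟩⟩
  -- Rt facts
  have hsvpos : ∀ j, 0 < sval Rt j := fun j => lt_of_lt_of_le (by positivity) (hsv j).1
  have hRtdet : IsUnit Rt.det := isUnit_det_of_sval_pos Rt hsvpos
  have hsMinRt : (1 + δ)⁻¹ ≤ sMin Rt :=
    le_csInf (Set.range_nonempty _) (by rintro b ⟨j, rfl⟩; exact (hsv j).1)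
  have hspecRt : specNorm Rt ≤ (1 - δ)⁻¹ :=
    csSup_le (Set.range_nonempty _) (by rintro b ⟨j, rfl⟩; exact (hsv j).2)
  have hRtInv : specNorm Rt⁻¹ ≤ 1 + δ := by
    refine (specNorm_inv_le Rt hkpos hRtdet).trans ?_
    have h3 := inv_anti₀ (by positivity : (0:ℝ) < (1 + δ)⁻¹) hsMinRt
    rwa [inv_inv] at h3
  -- At facts
  have hleadinv : lead Rt⁻¹ ℓ h1 h1 * lead Rt ℓ hℓk.le hℓk.le = 1 := by
    rw [← lead_mul h1 h1 Rt⁻¹ Rt hRt, Matrix.nonsing_inv_mul Rt hRtdet, lead_one]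
  have hAtdet : IsUnit (lead Rt ℓ hℓk.le hℓk.le).det :=
    Matrix.isUnit_det_of_left_inverse hleadinv
  have hAtinv : (lead Rt ℓ hℓk.le hℓk.le)⁻¹ = lead Rt⁻¹ ℓ h1 h1 :=
    Matrix.inv_eq_left_inv hleadinv
  -- injectivity of index embeddings
  have hinj2 : Function.Injective (fun t : Fin (k - ℓ) => (⟨ℓ + t.1, by omega⟩ : Fin k)) := by
    intro a b hab
    have h3 := congrArg Fin.val hab
    simp only at h3
    exact Fin.ext (by omega)
  -- norms of Rt blocks
  have hnAtinv : specNorm (lead Rt ℓ hℓk.le hℓk.le)⁻¹ ≤ 1 + δ := by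
    rw [hAtinv]
    exact le_trans
      (specNorm_submatrix_le Rt⁻¹ (Fin.castLE h1) (Fin.castLE h1)
        (Fin.castLE_injective h1) (Fin.castLE_injective h1) hℓ) hRtInv
  have hnBt : specNorm (topRight Rt ℓ hℓk.le) ≤ (1 - δ)⁻¹ :=
    le_trans
      (specNorm_submatrix_le Rt (Fin.castLE h1)
        (fun t : Fin (k - ℓ) => (⟨ℓ + t.1, by omega⟩ : Fin k))
        (Fin.castLE_injective h1) hinj2 hklpos) hspecRt
  -- Ah facts
  have hsAh : 0 < sMin (lead Rh ℓ hℓk.le (hℓk.le.trans hkn)) :=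
    sMin_pos _ hℓ hAh
  have hnAhinv : specNorm (lead Rh ℓ hℓk.le (hℓk.le.trans hkn))⁻¹
      ≤ (sMin (lead Rh ℓ hℓk.le (hℓk.le.trans hkn)))⁻¹ :=
    specNorm_inv_le _ hℓ hAh
  -- key identity
  have hkey : (lead (Rt * Rh) ℓ hℓk.le (hℓk.le.trans hkn))⁻¹ * topRight (Rt * Rh) ℓ hℓk.le
      = (lead Rh ℓ hℓk.le (hℓk.le.trans hkn))⁻¹ * topRight Rh ℓ hℓk.le
        + (lead Rh ℓ hℓk.le (hℓk.le.trans hkn))⁻¹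
          * (((lead Rt ℓ hℓk.le hℓk.le)⁻¹ * topRight Rt ℓ hℓk.le) * trail Rh ℓ) := by
    rw [lead_mul h1 h2 Rt Rh hRh, topRight_mul h1 Rt Rh, Matrix.mul_inv_rev, Matrix.mul_add]
    congr 1
    · calc (lead Rh ℓ hℓk.le (hℓk.le.trans hkn))⁻¹ * (lead Rt ℓ hℓk.le hℓk.le)⁻¹
            * (lead Rt ℓ hℓk.le hℓk.le * topRight Rh ℓ hℓk.le)
          = (lead Rh ℓ hℓk.le (hℓk.le.trans hkn))⁻¹
            * ((lead Rt ℓ hℓk.le hℓk.le)⁻¹ * lead Rt ℓ hℓk.le hℓk.le * topRight Rh ℓ hℓk.le) := by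
            simp only [Matrix.mul_assoc]
        _ = (lead Rh ℓ hℓk.le (hℓk.le.trans hkn))⁻¹ * topRight Rh ℓ hℓk.le := by
            rw [Matrix.nonsing_inv_mul _ hAtdet, Matrix.one_mul]
    · simp only [Matrix.mul_assoc]
  rw [hkey]
  have hChn : 0 ≤ specNorm (trail Rh ℓ) := specNorm_nonneg _
  have t2 : specNorm ((lead Rh ℓ hℓk.le (hℓk.le.trans hkn))⁻¹
        * (((lead Rt ℓ hℓk.le hℓk.le)⁻¹ * topRight Rt ℓ hℓk.le) * trail Rh ℓ))
      ≤ (sMin (lead Rh ℓ hℓk.le (hℓk.le.trans hkn)))⁻¹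
        * (((1 + δ) * (1 - δ)⁻¹) * specNorm (trail Rh ℓ)) := by
    refine (specNorm_mul_le _ _ hnlpos).trans ?_
    refine mul_le_mul hnAhinv ?_ (specNorm_nonneg _) (by positivity)
    refine (specNorm_mul_le _ _ hnlpos).trans ?_
    refine mul_le_mul_of_nonneg_right ?_ hChn
    refine (specNorm_mul_le _ _ hklpos).trans ?_
    exact mul_le_mul hnAtinv hnBt (specNorm_nonneg _) (by positivity)
  calc specNorm ((lead Rh ℓ hℓk.le (hℓk.le.trans hkn))⁻¹ * topRight Rh ℓ hℓk.le
        + (lead Rh ℓ hℓk.le (hℓk.le.trans hkn))⁻¹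
          * (((lead Rt ℓ hℓk.le hℓk.le)⁻¹ * topRight Rt ℓ hℓk.le) * trail Rh ℓ))
      ≤ specNorm ((lead Rh ℓ hℓk.le (hℓk.le.trans hkn))⁻¹ * topRight Rh ℓ hℓk.le)
        + specNorm ((lead Rh ℓ hℓk.le (hℓk.le.trans hkn))⁻¹
          * (((lead Rt ℓ hℓk.le hℓk.le)⁻¹ * topRight Rt ℓ hℓk.le) * trail Rh ℓ)) :=
        specNorm_add_le _ _ hnlpos
    _ ≤ specNorm ((lead Rh ℓ hℓk.le (hℓk.le.trans hkn))⁻¹ * topRight Rh ℓ hℓk.le)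
        + (sMin (lead Rh ℓ hℓk.le (hℓk.le.trans hkn)))⁻¹
          * (((1 + δ) * (1 - δ)⁻¹) * specNorm (trail Rh ℓ)) := by linarith
    _ = specNorm ((lead Rh ℓ hℓk.le (hℓk.le.trans hkn))⁻¹ * topRight Rh ℓ hℓk.le)
        + ((1 + δ) / (1 - δ)) * (sMin (lead Rh ℓ hℓk.le (hℓk.le.trans hkn)))⁻¹
          * specNorm (trail Rh ℓ) := by rw [div_eq_mul_inv]; ring
end
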